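/- Ellipsoid containment via matrix inequality: let Σ be symmetric positive definite, W = {z : zᵀΣ⁻¹z ≤ 1} ⊆ ℝⁿ, and L₁, L₂, L₃ ∈ ℝ^{m×n}. If there exists α ∈ (0,1) such that α⁻¹ L₁ΣL₁ᵀ + (1−α)⁻¹ L₂ΣL₂ᵀ ⪯ L₃ΣL₃ᵀ, then the Minkowski sum L₁W ⊕ L₂W is contained in L₃W. -/

import Mathlib

open Matrix
open scoped MatrixOrder

noncomputable section

lemma dot_quad {m : Type*} {q : Type*} [Fintype m] [Fintype q] (B : Matrix m q ℝ) (y : m → ℝ) :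
    y ⬝ᵥ ((B * Bᵀ) *ᵥ y) = (Bᵀ *ᵥ y) ⬝ᵥ (Bᵀ *ᵥ y) := by
  rw [← mulVec_mulVec, dotProduct_mulVec, ← mulVec_transpose]

lemma inner_eq_dot {k : Type*} [Fintype k] (x y : EuclideanSpace ℝ k) :
    inner ℝ x y = (WithLp.equiv 2 (k → ℝ) x) ⬝ᵥ (WithLp.equiv 2 (k → ℝ) y) := by
  simp [PiLp.inner_apply, dotProduct, mul_comm]

lemma douglas {m n : ℕ} {p : Type*} [Fintype p]
    (C : Matrix (Fin m) (Fin n) ℝ) (D : Matrix (Fin m) p ℝ)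
    (h : (C * Cᵀ - D * Dᵀ).PosSemidef) (v : p → ℝ) :
    ∃ w : Fin n → ℝ, C *ᵥ w = D *ᵥ v ∧ w ⬝ᵥ w ≤ v ⬝ᵥ v := by
  classical
  -- key: ker Cᵀ ⊆ ker Dᵀ
  have key : ∀ y : Fin m → ℝ, Cᵀ *ᵥ y = 0 → Dᵀ *ᵥ y = 0 := by
    intro y hy
    have h1 := h.dotProduct_mulVec_nonneg y
    rw [show star y = y from rfl, sub_mulVec, dotProduct_sub, dot_quad, dot_quad, hy] at h1
    have h2 : (Dᵀ *ᵥ y) ⬝ᵥ (Dᵀ *ᵥ y) ≤ 0 := by simpa using h1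
    have h3 : (Dᵀ *ᵥ y) ⬝ᵥ (Dᵀ *ᵥ y) = 0 :=
      le_antisymm h2 (by simpa using dotProduct_self_star_nonneg (Dᵀ *ᵥ y))
    exact (dotProduct_self_eq_zero).mp h3
  set T : EuclideanSpace ℝ (Fin n) →ₗ[ℝ] EuclideanSpace ℝ (Fin m) := toEuclideanLin C with hT
  set T' : EuclideanSpace ℝ (Fin m) →ₗ[ℝ] EuclideanSpace ℝ (Fin n) := toEuclideanLin Cᵀ with hT'
  have hTapp : ∀ x : EuclideanSpace ℝ (Fin n),
      WithLp.equiv 2 (Fin m → ℝ) (T x) = C *ᵥ (WithLp.equiv 2 (Fin n → ℝ) x) := by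
    intro x; rw [hT]; rfl
  have hT'app : ∀ x : EuclideanSpace ℝ (Fin m),
      WithLp.equiv 2 (Fin n → ℝ) (T' x) = Cᵀ *ᵥ (WithLp.equiv 2 (Fin m → ℝ) x) := by
    intro x; rw [hT']; rfl
  have adj : ∀ (a : EuclideanSpace ℝ (Fin n)) (b : EuclideanSpace ℝ (Fin m)),
      inner ℝ (T a) b = (inner ℝ a (T' b) : ℝ) := by
    intro a b
    rw [inner_eq_dot, inner_eq_dot, hTapp, hT'app, dotProduct_mulVec, vecMul_transpose]
  set x' : EuclideanSpace ℝ (Fin m) := (WithLp.equiv 2 (Fin m → ℝ)).symm (D *ᵥ v) with hx'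
  -- (range T)ᗮ ≤ ker T'
  have h1 : (LinearMap.range T)ᗮ ≤ LinearMap.ker T' := by
    intro y hy
    rw [LinearMap.mem_ker]
    have : inner ℝ (T (T' y)) y = (0:ℝ) :=
      (Submodule.mem_orthogonal _ y).mp hy _ (LinearMap.mem_range_self _ _)
    rw [adj] at this
    exact inner_self_eq_zero.mp this
  -- x' ∈ (ker T')ᗮ
  have h2 : x' ∈ (LinearMap.ker T')ᗮ := by
    rw [Submodule.mem_orthogonal]
    intro y hy
    rw [LinearMap.mem_ker] at hy
    have hCy : Cᵀ *ᵥ (WithLp.equiv 2 (Fin m → ℝ) y) = 0 := by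
      rw [← hT'app, hy]; rfl
    have hDy := key _ hCy
    rw [inner_eq_dot, hx']
    rw [show WithLp.equiv 2 (Fin m → ℝ) ((WithLp.equiv 2 (Fin m → ℝ)).symm (D *ᵥ v)) = D *ᵥ v
      from (WithLp.equiv 2 (Fin m → ℝ)).apply_symm_apply _]
    rw [dotProduct_mulVec, ← mulVec_transpose, hDy, zero_dotProduct]
  have h3 : x' ∈ LinearMap.range T := by
    have := Submodule.orthogonal_le h1 h2
    rwa [Submodule.orthogonal_orthogonal] at this
  obtain ⟨w0, hw0⟩ := h3
  obtain ⟨a, ha, b, hb, hab⟩ :=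
    Submodule.exists_add_mem_mem_orthogonal (K := LinearMap.range T') w0
  have hTb : T b = 0 := by
    have : inner ℝ (T b) (T b) = (0:ℝ) := by
      rw [adj, real_inner_comm]
      exact ((Submodule.mem_orthogonal _ b).mp hb _ (LinearMap.mem_range_self _ _))
    exact inner_self_eq_zero.mp this
  have hTa : T a = x' := by
    rw [← hw0, hab, map_add, hTb, add_zero]
  obtain ⟨u, hu⟩ := ha
  set u' : Fin m → ℝ := WithLp.equiv 2 (Fin m → ℝ) u with hu'
  set d : EuclideanSpace ℝ p := (WithLp.equiv 2 (p → ℝ)).symm (Dᵀ *ᵥ u') with hd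
  set v' : EuclideanSpace ℝ p := (WithLp.equiv 2 (p → ℝ)).symm v with hv'
  have hdd : (inner ℝ d d : ℝ) = (Dᵀ *ᵥ u') ⬝ᵥ (Dᵀ *ᵥ u') := by
    rw [inner_eq_dot, hd, (WithLp.equiv 2 (p → ℝ)).apply_symm_apply]
  have hquad : (Dᵀ *ᵥ u') ⬝ᵥ (Dᵀ *ᵥ u') ≤ (Cᵀ *ᵥ u') ⬝ᵥ (Cᵀ *ᵥ u') := by
    have h1 := h.dotProduct_mulVec_nonneg u'
    rw [show star u' = u' from rfl, sub_mulVec, dotProduct_sub, dot_quad, dot_quad] at h1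
    linarith
  have haa : (inner ℝ a a : ℝ) = (Cᵀ *ᵥ u') ⬝ᵥ (Cᵀ *ᵥ u') := by
    rw [← hu, inner_eq_dot, hT'app]
  have hdle : ‖d‖ ≤ ‖a‖ := by
    have h4 : ‖d‖ ^ 2 ≤ ‖a‖ ^ 2 := by
      rw [← real_inner_self_eq_norm_sq, ← real_inner_self_eq_norm_sq, hdd, haa]
      exact hquad
    have := Real.sqrt_le_sqrt h4
    rwa [Real.sqrt_sq (norm_nonneg _), Real.sqrt_sq (norm_nonneg _)] at this
  have hinner : (inner ℝ a a : ℝ) ≤ ‖a‖ * ‖v'‖ := by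
    have e1 : (inner ℝ a a : ℝ) = inner ℝ d v' := by
      nth_rewrite 1 [← hu]
      rw [real_inner_comm, ← adj, hTa, inner_eq_dot, inner_eq_dot, hd, hv',
        (WithLp.equiv 2 (p → ℝ)).apply_symm_apply, (WithLp.equiv 2 (p → ℝ)).apply_symm_apply,
        hx', (WithLp.equiv 2 (Fin m → ℝ)).apply_symm_apply, dotProduct_comm,
        dotProduct_mulVec, ← mulVec_transpose, ← hu']
    rw [e1]
    exact le_trans (real_inner_le_norm d v') (by
      have := mul_le_mul_of_nonneg_right hdle (norm_nonneg v')
      linarith)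
  have hav : ‖a‖ ≤ ‖v'‖ := by
    by_cases hA : ‖a‖ = 0
    · rw [hA]; exact norm_nonneg _
    · have hApos : 0 < ‖a‖ := lt_of_le_of_ne (norm_nonneg a) (Ne.symm hA)
      have : ‖a‖ * ‖a‖ ≤ ‖a‖ * ‖v'‖ := by
        rw [← real_inner_self_eq_norm_mul_norm]; exact hinner
      exact le_of_mul_le_mul_left this hApos
  refine ⟨WithLp.equiv 2 (Fin n → ℝ) a, ?_, ?_⟩
  · rw [← hTapp, hTa, hx', (WithLp.equiv 2 (Fin m → ℝ)).apply_symm_apply]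
  · have e2 : (WithLp.equiv 2 (Fin n → ℝ) a) ⬝ᵥ (WithLp.equiv 2 (Fin n → ℝ) a) = ‖a‖ ^ 2 := by
      rw [← inner_eq_dot, real_inner_self_eq_norm_sq]
    have e3 : v ⬝ᵥ v = ‖v'‖ ^ 2 := by
      rw [show v = WithLp.equiv 2 (p → ℝ) v' from ((WithLp.equiv 2 (p → ℝ)).apply_symm_apply v).symm,
        ← inner_eq_dot, real_inner_self_eq_norm_sq]
    rw [e2, e3]
    exact pow_le_pow_left₀ (norm_nonneg _) hav 2

lemma mulVec_dot {m n : Type*} [Fintype m] [Fintype n]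
    (A : Matrix m n ℝ) (x : n → ℝ) (y : m → ℝ) :
    (A *ᵥ x) ⬝ᵥ y = x ⬝ᵥ (Aᵀ *ᵥ y) := by
  rw [dotProduct_comm, dotProduct_mulVec, ← mulVec_transpose, dotProduct_comm]

def ellipsoid {n : ℕ} (S : Matrix (Fin n) (Fin n) ℝ) : Set (Fin n → ℝ) :=
  {z | z ⬝ᵥ (S⁻¹ *ᵥ z) ≤ 1}

/-- Ellipsoid containment via matrix inequality: if there exists α ∈ (0,1) with
α⁻¹L₁ΣL₁ᵀ + (1−α)⁻¹L₂ΣL₂ᵀ ⪯ L₃ΣL₃ᵀ, then L₁W ⊕ L₂W ⊆ L₃W. -/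
theorem stmt4 {m n : ℕ} (Sig : Matrix (Fin n) (Fin n) ℝ) (hSig : Sig.PosDef)
    (L1 L2 L3 : Matrix (Fin m) (Fin n) ℝ) (α : ℝ) (hα : α ∈ Set.Ioo (0:ℝ) 1)
    (h : (L3 * Sig * L3ᵀ -
        (α⁻¹ • (L1 * Sig * L1ᵀ) + (1 - α)⁻¹ • (L2 * Sig * L2ᵀ))).PosSemidef) :
    ∀ z1 ∈ ellipsoid Sig, ∀ z2 ∈ ellipsoid Sig,
      ∃ z3 ∈ ellipsoid Sig, L1 *ᵥ z1 + L2 *ᵥ z2 = L3 *ᵥ z3 := by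
  obtain ⟨hα0, hα1⟩ := hα
  have hα1' : (0:ℝ) < 1 - α := by linarith
  intro z1 hz1 z2 hz2
  set S := CFC.sqrt Sig with hSdef
  have hSpsd : S.PosSemidef := (CFC.sqrt_nonneg Sig).posSemidef
  have hSS : S * S = Sig := CFC.sqrt_mul_sqrt_self Sig hSig.posSemidef.nonneg
  have hST : Sᵀ = S := by
    have := hSpsd.1
    rwa [Matrix.IsHermitian, conjTranspose_eq_transpose_of_trivial] at this
  have hdet : IsUnit S.det := by
    have h1 : S.det * S.det = Sig.det := by rw [← det_mul, hSS]
    have h2 : (0:ℝ) < Sig.det := hSig.det_pos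
    refine isUnit_iff_ne_zero.mpr fun hc => ?_
    rw [hc, mul_zero] at h1; linarith
  have hSinv : S * S⁻¹ = 1 := mul_nonsing_inv S hdet
  have hSinv' : S⁻¹ * S = 1 := nonsing_inv_mul S hdet
  have hSinvT : S⁻¹ᵀ = S⁻¹ := by rw [transpose_nonsing_inv, hST]
  have hSiginv : Sig⁻¹ = S⁻¹ * S⁻¹ := by rw [← hSS, Matrix.mul_inv_rev]
  -- ellipsoid as quadratic form for S-image vectors
  have hquad : ∀ w : Fin n → ℝ, (S *ᵥ w) ⬝ᵥ (Sig⁻¹ *ᵥ (S *ᵥ w)) = w ⬝ᵥ w := by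
    intro w
    rw [hSiginv, mulVec_dot, mulVec_mulVec, mulVec_mulVec, hST, ← Matrix.mul_assoc,
      hSinv, Matrix.one_mul, hSinv', one_mulVec]
  set w1 : Fin n → ℝ := S⁻¹ *ᵥ z1 with hw1
  set w2 : Fin n → ℝ := S⁻¹ *ᵥ z2 with hw2
  have hz1' : z1 = S *ᵥ w1 := by rw [hw1, mulVec_mulVec, hSinv, one_mulVec]
  have hz2' : z2 = S *ᵥ w2 := by rw [hw2, mulVec_mulVec, hSinv, one_mulVec]
  have hw1n : w1 ⬝ᵥ w1 ≤ 1 := by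
    have := hquad w1; rw [← hz1'] at this; rw [← this]; exact hz1
  have hw2n : w2 ⬝ᵥ w2 ≤ 1 := by
    have := hquad w2; rw [← hz2'] at this; rw [← this]; exact hz2
  -- matrices
  set A1 := L1 * S with hA1
  set A2 := L2 * S with hA2
  set C := L3 * S with hC
  have hsq : ∀ L : Matrix (Fin m) (Fin n) ℝ, (L * S) * (L * S)ᵀ = L * Sig * Lᵀ := by
    intro L
    rw [transpose_mul, hST, Matrix.mul_assoc, ← Matrix.mul_assoc S S, hSS, ← Matrix.mul_assoc,
      Matrix.mul_assoc]
  set D : Matrix (Fin m) (Fin n ⊕ Fin n) ℝ :=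
    fromCols (Real.sqrt α⁻¹ • A1) (Real.sqrt (1-α)⁻¹ • A2) with hD
  have hsmulmul : ∀ (c : ℝ) (A : Matrix (Fin m) (Fin n) ℝ), 0 ≤ c →
      (Real.sqrt c • A) * (Real.sqrt c • A)ᵀ = c • (A * Aᵀ) := by
    intro c A hc
    rw [transpose_smul, Matrix.smul_mul, Matrix.mul_smul, smul_smul, Real.mul_self_sqrt hc]
  have hDD : D * Dᵀ = α⁻¹ • (L1 * Sig * L1ᵀ) + (1 - α)⁻¹ • (L2 * Sig * L2ᵀ) := by
    rw [hD, transpose_fromCols, fromCols_mul_fromRows,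
      hsmulmul _ _ (inv_nonneg.mpr hα0.le), hsmulmul _ _ (inv_nonneg.mpr hα1'.le),
      hA1, hA2, hsq, hsq]
  have hCC : C * Cᵀ = L3 * Sig * L3ᵀ := by rw [hC, hsq]
  have hpsd : (C * Cᵀ - D * Dᵀ).PosSemidef := by rw [hCC, hDD]; exact h
  set v : (Fin n ⊕ Fin n) → ℝ := Sum.elim (Real.sqrt α • w1) (Real.sqrt (1-α) • w2) with hv
  obtain ⟨w, hw, hwn⟩ := douglas C D hpsd v
  have hDv : D *ᵥ v = L1 *ᵥ z1 + L2 *ᵥ z2 := by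
    rw [hD, hv, fromCols_mulVec_sumElim, smul_mulVec, smul_mulVec,
      mulVec_smul, mulVec_smul, smul_smul, smul_smul,
      Real.sqrt_inv α, Real.sqrt_inv (1-α),
      inv_mul_cancel₀ (by positivity : Real.sqrt α ≠ 0),
      inv_mul_cancel₀ (by positivity : Real.sqrt (1-α) ≠ 0),
      one_smul, one_smul, hA1, hA2, ← mulVec_mulVec, ← mulVec_mulVec, ← hz1', ← hz2']
  have hvv : v ⬝ᵥ v ≤ 1 := by
    rw [hv, sumElim_dotProduct_sumElim, smul_dotProduct, smul_dotProduct,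
      dotProduct_smul, dotProduct_smul, smul_smul, smul_smul,
      Real.mul_self_sqrt hα0.le, Real.mul_self_sqrt hα1'.le]
    have e1 : α * (w1 ⬝ᵥ w1) ≤ α := by
      nth_rewrite 2 [show α = α * 1 by ring]
      exact mul_le_mul_of_nonneg_left hw1n hα0.le
    have e2 : (1-α) * (w2 ⬝ᵥ w2) ≤ (1-α) := by
      nth_rewrite 2 [show (1-α) = (1-α) * 1 by ring]
      exact mul_le_mul_of_nonneg_left hw2n hα1'.le
    simp only [smul_eq_mul]
    linarith
  refine ⟨S *ᵥ w, ?_, ?_⟩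
  · show (S *ᵥ w) ⬝ᵥ (Sig⁻¹ *ᵥ (S *ᵥ w)) ≤ 1
    rw [hquad w]
    exact le_trans hwn hvv
  · rw [mulVec_mulVec, ← hC, hw, hDv]

end
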